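/- Let E be a finite set. If T is an m-partition of E (for some integer m > 0), then T is exactly the set of hyperplanes of a paving matroid of rank m+1 on E. Conversely, for every integer r \ge 2 and every rank-r paving matroid M on E, the set of hyperplanes of M is an (r-1)-partition of E. -/

import Mathlib

open MvPolynomial Finset
open scoped Matroid

namespace TuttePaper

open Classical

variable {α : Type*}

/-- The rank of a set in a matroid: the maximum cardinality of an independent subset. -/
noncomputable def rk (M : Matroid α) (A : Set α) : ℕ :=
  sSup {n | ∃ I, M.Indep I ∧ I ⊆ A ∧ I.ncard = n}

/-- The Tutte polynomial of a matroid with finite ground set, as an element of ℤ[x,y];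
the variable `X 0` plays the role of `x` and `X 1` that of `y`:
`T_M(x,y) = ∑_{A ⊆ E} (x-1)^(r(E)-r(A)) (y-1)^(|A|-r(A))`. -/
noncomputable def tutte (M : Matroid α) : MvPolynomial (Fin 2) ℤ :=
  if hE : M.E.Finite then
    ∑ A ∈ hE.toFinset.powerset,
      (X 0 - 1) ^ (rk M M.E - rk M ↑A) * (X 1 - 1) ^ (A.card - rk M ↑A)
  else 0

/-- The Tutte polynomial with `x` evaluated at `1`, i.e. `T_M(1,y)`, as an element of ℤ[x,y]. -/
noncomputable def tutteX1 (M : Matroid α) : MvPolynomial (Fin 2) ℤ :=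
  eval₂ C (fun i => if i = 0 then 1 else X 1) (tutte M)

/-- A loop of a matroid: an element whose singleton has rank zero. -/
def IsLoop (M : Matroid α) (e : α) : Prop := rk M {e} = 0

/-- A coloop of a matroid: an element contained in every basis. -/
def IsColoop (M : Matroid α) (e : α) : Prop := ∀ B, M.IsBase B → e ∈ B

/-- A circuit of a matroid: a minimal dependent set. -/
def IsCircuit (M : Matroid α) (C : Set α) : Prop :=
  C ⊆ M.E ∧ ¬ M.Indep C ∧ ∀ D ⊂ C, M.Indep D

/-- A hyperplane of a matroid: a flat of rank `r(M) - 1`. -/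
def IsHyperplane (M : Matroid α) (H : Set α) : Prop :=
  M.IsFlat H ∧ rk M H + 1 = rk M M.E

/-- Deletion of a set of elements from a matroid. -/
def deleteSet (M : Matroid α) (D : Set α) : Matroid α := M ↾ (M.E \ D)

/-- Contraction of a set of elements in a matroid, `M/C = (M✶ \ C)✶`. -/
def contractSet (M : Matroid α) (C : Set α) : Matroid α := ((M✶) ↾ (M.E \ C))✶

/-- Deletion of a single element. -/
def deleteElem (M : Matroid α) (e : α) : Matroid α := deleteSet M {e}

/-- Contraction of a single element. -/
def contractElem (M : Matroid α) (e : α) : Matroid α := contractSet M {e}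

/-- A matroid is paving if every circuit has size at least the rank of the matroid. -/
def Paving (M : Matroid α) : Prop := ∀ C, IsCircuit M C → rk M M.E ≤ C.ncard

/-- A matroid is sparse paving if it is paving and any two distinct circuits of size `r(M)`
have symmetric difference of size greater than two. -/
def SparsePaving (M : Matroid α) : Prop :=
  Paving M ∧ ∀ C₁ C₂, IsCircuit M C₁ → IsCircuit M C₂ →
    C₁.ncard = rk M M.E → C₂.ncard = rk M M.E → C₁ ≠ C₂ → 2 < (symmDiff C₁ C₂).ncard

/-- An `m`-partition of a set `E`: a collection of at least two subsets of `E`, each with at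
least `m` elements, such that every `m`-element subset of `E` is contained in exactly one
member of the collection. -/
def IsMPartition (m : ℕ) (E : Set α) (T : Set (Set α)) : Prop :=
  1 < T.ncard ∧ (∀ B ∈ T, B ⊆ E ∧ m ≤ B.ncard) ∧
    ∀ S ⊆ E, S.ncard = m → ∃! B, B ∈ T ∧ S ⊆ B

/-- `tcoef M i j` is the coefficient `t_{ij}` of `x^i y^j` in the Tutte polynomial of `M`. -/
noncomputable def tcoef (M : Matroid α) (i j : ℕ) : ℤ :=
  MvPolynomial.coeff (Finsupp.single (0 : Fin 2) i + Finsupp.single (1 : Fin 2) j) (tutte M)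

/-- The characteristic polynomial `χ_N(λ) = ∑_{A ⊆ E} (-1)^{|A|} λ^{r(E)-r(A)}` of a matroid,
evaluated at an element `l` of a commutative ring. -/
noncomputable def charEval {R : Type*} [CommRing R] (N : Matroid α) (l : R) : R :=
  if hE : N.E.Finite then
    ∑ A ∈ hE.toFinset.powerset, (-1 : R) ^ A.card * l ^ (rk N N.E - rk N ↑A)
  else 0

/-- Crapo's coboundary polynomial `χ̄_M(λ,t) = ∑_{X flat of M} t^{|X|} χ_{M/X}(λ)`,
evaluated at elements `l`, `t` of a commutative ring. -/
noncomputable def cobEval {R : Type*} [CommRing R] (M : Matroid α) (l t : R) : R :=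
  if hE : M.E.Finite then
    (hE.toFinset.powerset.filter (fun F : Finset α => M.IsFlat ↑F)).sum
      (fun F => t ^ F.card * charEval (contractSet M ↑F) l)
  else 0

/-! ### Auxiliary lemmas -/

lemma flat_closure (M : Matroid α) (X : Set α) : M.IsFlat (M.closure X) := by
  rw [Matroid.closure_eq_subtypeClosure]
  exact Matroid.isClosed_iff_isFlat.mp (M.subtypeClosure.isClosed_closure _)

lemma rkSet_nonempty (M : Matroid α) (A : Set α) :
    {n | ∃ I, M.Indep I ∧ I ⊆ A ∧ I.ncard = n}.Nonempty :=
  ⟨0, ∅, M.empty_indep, Set.empty_subset _, Set.ncard_empty _⟩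

lemma rkSet_bddAbove (M : Matroid α) (hE : M.E.Finite) (A : Set α) :
    BddAbove {n | ∃ I, M.Indep I ∧ I ⊆ A ∧ I.ncard = n} := by
  refine ⟨M.E.ncard, ?_⟩
  rintro n ⟨I, hI, -, rfl⟩
  exact Set.ncard_le_ncard hI.subset_ground hE

lemma le_rk (M : Matroid α) (hE : M.E.Finite) {A I : Set α}
    (hI : M.Indep I) (hIA : I ⊆ A) : I.ncard ≤ rk M A :=
  le_csSup (rkSet_bddAbove M hE A) ⟨I, hI, hIA, rfl⟩

lemma rk_le (M : Matroid α) {A : Set α} {k : ℕ}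
    (h : ∀ I, M.Indep I → I ⊆ A → I.ncard ≤ k) : rk M A ≤ k := by
  refine csSup_le (rkSet_nonempty M A) ?_
  rintro n ⟨I, hI, hIA, rfl⟩
  exact h I hI hIA

lemma exists_rk (M : Matroid α) (hE : M.E.Finite) (A : Set α) :
    ∃ I, M.Indep I ∧ I ⊆ A ∧ I.ncard = rk M A :=
  Nat.sSup_mem (rkSet_nonempty M A) (rkSet_bddAbove M hE A)

lemma rk_basis (M : Matroid α) (hE : M.E.Finite) {I X : Set α}
    (hIX : M.IsBasis I X) : rk M X = I.ncard := by
  refine le_antisymm (rk_le M ?_) (le_rk M hE hIX.indep hIX.subset)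
  intro J hJ hJX
  obtain ⟨J', hJ', hJJ'⟩ := hJ.subset_isBasis_of_subset hJX hIX.subset_ground
  have hcard := hIX.encard_eq_encard hJ'
  have hle : J.ncard ≤ J'.ncard :=
    Set.ncard_le_ncard hJJ' (hE.subset hJ'.indep.subset_ground)
  rwa [Set.ncard_def, Set.ncard_def, ← hcard] at hle

lemma rk_indep (M : Matroid α) (hE : M.E.Finite) {I : Set α}
    (hI : M.Indep I) : rk M I = I.ncard :=
  rk_basis M hE hI.isBasis_self

lemma rk_closure (M : Matroid α) (hE : M.E.Finite) {X : Set α} (hX : X ⊆ M.E) :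
    rk M (M.closure X) = rk M X := by
  obtain ⟨I, hI⟩ := M.exists_isBasis X hX
  rw [rk_basis M hE hI.isBasis_closure_right, rk_basis M hE hI]

/-- Every dependent subset of the ground set of a finite matroid contains a circuit. -/
lemma exists_circuit_subset (M : Matroid α) (hE : M.E.Finite) :
    ∀ n (S : Set α), S.ncard = n → S ⊆ M.E → ¬ M.Indep S →
      ∃ C, C ⊆ S ∧ IsCircuit M C := by
  intro n
  induction n using Nat.strong_induction_on with
  | _ n ih =>
    intro S hScard hSE hdep
    by_cases h : ∀ D, D ⊂ S → M.Indep D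
    · exact ⟨S, Set.Subset.rfl, hSE, hdep, h⟩
    · push_neg at h
      obtain ⟨D, hDS, hDdep⟩ := h
      have hlt : D.ncard < S.ncard := Set.ncard_lt_ncard hDS (hE.subset hSE)
      obtain ⟨C, hCD, hC⟩ :=
        ih D.ncard (hScard ▸ hlt) D rfl (hDS.subset.trans hSE) hDdep
      exact ⟨C, hCD.trans hDS.subset, hC⟩

/-- an `m`-partition of a finite set `E` is exactly the set of hyperplanes of
a paving matroid of rank `m + 1` on `E`; conversely, the set of hyperplanes of a rank-`r`
paving matroid (`r ≥ 2`) on `E` is an `(r-1)`-partition of `E`. -/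
theorem mPartition_paving (E : Set α) (hE : E.Finite) :
    (∀ m : ℕ, 0 < m → ∀ T : Set (Set α), IsMPartition m E T →
      ∃ M : Matroid α, M.E = E ∧ rk M M.E = m + 1 ∧ Paving M ∧
        {H : Set α | IsHyperplane M H} = T) ∧
    (∀ (r : ℕ) (M : Matroid α), 2 ≤ r → M.E = E → rk M M.E = r → Paving M →
      IsMPartition (r - 1) E {H : Set α | IsHyperplane M H}) := by
  constructor
  · -- Direction 1: from an m-partition to a paving matroid
    intro m hm T hT
    obtain ⟨hT1, hT2, hT3⟩ := hT
    -- the independence predicate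
    set Ind : Set α → Prop :=
      fun I => I ⊆ E ∧ I.ncard ≤ m + 1 ∧ ∀ B ∈ T, I ⊆ B → I.ncard ≤ m with hInd
    have hu : ∀ {S B B' : Set α}, S ⊆ E → S.ncard = m → B ∈ T → B' ∈ T →
        S ⊆ B → S ⊆ B' → B = B' := by
      intro S B B' hSE hSm hB hB' hSB hSB'
      obtain ⟨B₀, -, hB₀u⟩ := hT3 S hSE hSm
      rw [hB₀u B ⟨hB, hSB⟩, hB₀u B' ⟨hB', hSB'⟩]
    have hemp : Ind ∅ := ⟨Set.empty_subset E, by simp, fun B _ _ => by simp⟩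
    have hsub : ∀ ⦃I J : Set α⦄, Ind J → I ⊆ J → Ind I := by
      intro I J hJ hIJ
      have hJfin : J.Finite := hE.subset hJ.1
      refine ⟨hIJ.trans hJ.1, (Set.ncard_le_ncard hIJ hJfin).trans hJ.2.1, ?_⟩
      intro B hB hIB
      rcases hIJ.eq_or_ssubset with rfl | hss
      · exact hJ.2.2 B hB hIB
      · have h1 := Set.ncard_lt_ncard hss hJfin
        have h2 := hJ.2.1
        omega
    have haug : ∀ ⦃I J : Set α⦄, Ind I → Ind J → I.ncard < J.ncard →
        ∃ e ∈ J, e ∉ I ∧ Ind (insert e I) := by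
      intro I J hI hJ hIJ
      have hIfin : I.Finite := hE.subset hI.1
      by_cases hcase : I.ncard < m
      · have hns : ¬ J ⊆ I := fun h =>
          absurd (Set.ncard_le_ncard h hIfin) (by omega)
        obtain ⟨e, heJ, heI⟩ := Set.not_subset.mp hns
        have hc : (insert e I).ncard = I.ncard + 1 :=
          Set.ncard_insert_of_notMem heI hIfin
        exact ⟨e, heJ, heI, Set.insert_subset (hJ.1 heJ) hI.1, by omega,
          fun B _ _ => by omega⟩
      · have hJ21 := hJ.2.1
        have hIm : I.ncard = m := by omega
        have hJm : J.ncard = m + 1 := by omega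
        obtain ⟨B₀, ⟨hB₀T, hIB₀⟩, hB₀u⟩ := hT3 I hI.1 hIm
        have hns : ¬ J ⊆ B₀ := by
          intro h
          have := hJ.2.2 B₀ hB₀T h
          omega
        obtain ⟨e, heJ, heB₀⟩ := Set.not_subset.mp hns
        have heI : e ∉ I := fun h => heB₀ (hIB₀ h)
        refine ⟨e, heJ, heI, Set.insert_subset (hJ.1 heJ) hI.1, ?_, ?_⟩
        · rw [Set.ncard_insert_of_notMem heI hIfin]; omega
        · intro B hB hIB'
          exfalso
          have hIB : I ⊆ B := (Set.subset_insert e I).trans hIB'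
          have hBB₀ : B = B₀ := hB₀u B ⟨hB, hIB⟩
          exact heB₀ (hBB₀ ▸ hIB' (Set.mem_insert e I))
    set M : Matroid α :=
      (IndepMatroid.ofFinite hE Ind hemp hsub haug (fun I hI => hI.1)).matroid with hM
    have hME : M.E = E := rfl
    have hMind : ∀ I, M.Indep I ↔ Ind I := fun I => Iff.rfl
    have hEfin : M.E.Finite := hE
    -- small subsets of E are independent
    have hsmall : ∀ S : Set α, S ⊆ E → S.ncard ≤ m → Ind S :=
      fun S hSE h => ⟨hSE, by omega, fun B _ _ => h⟩
    -- the span lemma : if S is an m-subset of B ∈ T then cl S sits between S and B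
    have hspan : ∀ B ∈ T, ∀ S : Set α, S ⊆ B → S.ncard = m →
        B ⊆ M.closure S ∧ M.closure S ⊆ B := by
      intro B hB S hSB hSm
      have hBE : B ⊆ E := (hT2 B hB).1
      have hSE : S ⊆ E := hSB.trans hBE
      have hSfin : S.Finite := hE.subset hSE
      have hSi : M.Indep S := (hMind S).mpr (hsmall S hSE (le_of_eq hSm))
      constructor
      · intro y hyB
        by_cases hyS : y ∈ S
        · exact M.subset_closure S hSE hyS
        · rw [Matroid.Indep.mem_closure_iff_of_notMem (M := M) hSi hyS]
          refine ⟨?_, Set.insert_subset (hBE hyB) hSE⟩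
          intro hind
          have := ((hMind _).mp hind).2.2 B hB
            (Set.insert_subset hyB hSB)
          rw [Set.ncard_insert_of_notMem hyS hSfin] at this
          omega
      · intro x hx
        by_contra hxB
        have hxE : x ∈ E := M.closure_subset_ground S hx
        have hxS : x ∉ S := fun h => hxB (hSB h)
        rw [Matroid.Indep.mem_closure_iff_of_notMem (M := M) hSi hxS] at hx
        refine hx.not_indep ((hMind _).mpr ?_)
        refine ⟨Set.insert_subset hxE hSE, ?_, ?_⟩
        · rw [Set.ncard_insert_of_notMem hxS hSfin]; omega
        · intro B' hB' hsub'
          exfalso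
          have hSB' : S ⊆ B' := (Set.subset_insert x S).trans hsub'
          have : B' = B := hu hSE hSm hB' hB hSB' hSB
          exact hxB (this ▸ hsub' (Set.mem_insert x S))
    -- rank of members of T is m
    have hrkB : ∀ B ∈ T, rk M B = m := by
      intro B hB
      obtain ⟨S, hSB, hSm⟩ := Set.exists_subset_card_eq (hT2 B hB).2
      refine le_antisymm (rk_le M ?_) ?_
      · intro I hI hIB
        exact ((hMind I).mp hI).2.2 B hB hIB
      · have hSi : M.Indep S :=
          (hMind S).mpr (hsmall S (hSB.trans (hT2 B hB).1) (le_of_eq hSm))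
        have := le_rk M hEfin hSi hSB
        omega
    -- rank of the matroid is m + 1
    have hrkE : rk M M.E = m + 1 := by
      refine le_antisymm (rk_le M fun I hI _ => ((hMind I).mp hI).2.1) ?_
      have hTfin : T.Finite := by
        by_contra h
        rw [Set.Infinite.ncard h] at hT1
        omega
      obtain ⟨B₁, hB₁, B₂, hB₂, hB12⟩ := (Set.one_lt_ncard hTfin).mp hT1
      obtain ⟨hB₁E, hB₁m⟩ := hT2 B₁ hB₁
      obtain ⟨hB₂E, hB₂m⟩ := hT2 B₂ hB₂
      obtain ⟨S₁, hS₁B, hS₁m⟩ := Set.exists_subset_card_eq hB₁m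
      have hns : ¬ B₂ ⊆ B₁ := by
        intro h
        obtain ⟨S₂, hS₂B, hS₂m⟩ := Set.exists_subset_card_eq hB₂m
        exact hB12 (hu (hS₂B.trans hB₂E) hS₂m hB₁ hB₂ (hS₂B.trans h) hS₂B)
      obtain ⟨x, hxB₂, hxB₁⟩ := Set.not_subset.mp hns
      have hxS₁ : x ∉ S₁ := fun h => hxB₁ (hS₁B h)
      have hScard : (insert x S₁).ncard = m + 1 := by
        rw [Set.ncard_insert_of_notMem hxS₁ (hE.subset (hS₁B.trans hB₁E))]
        omega
      have hIx : M.Indep (insert x S₁) := by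
        refine (hMind _).mpr ⟨Set.insert_subset (hB₂E hxB₂) (hS₁B.trans hB₁E), ?_, ?_⟩
        · omega
        · intro B hB hsub'
          exfalso
          have hS₁B' : S₁ ⊆ B := (Set.subset_insert x S₁).trans hsub'
          have : B = B₁ := hu (hS₁B.trans hB₁E) hS₁m hB hB₁ hS₁B' hS₁B
          exact hxB₁ (this ▸ hsub' (Set.mem_insert x S₁))
      have := le_rk M hEfin hIx hIx.subset_ground
      omega
    -- the matroid is paving
    have hpav : Paving M := by
      intro C hC
      obtain ⟨hCE, hCdep, -⟩ := hC
      rw [hMind] at hCdep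
      rw [hrkE]
      by_contra hlt
      push_neg at hlt
      exact hCdep ⟨hCE, by omega, fun B _ _ => by omega⟩
    refine ⟨M, rfl, hrkE, hpav, ?_⟩
    -- hyperplanes are exactly the members of T
    ext H
    simp only [Set.mem_setOf_eq]
    constructor
    · rintro ⟨hHflat, hHrk⟩
      have hHE : H ⊆ E := hHflat.subset_ground
      have hrkH : rk M H = m := by rw [hrkE] at hHrk; omega
      obtain ⟨S, hSi, hSH, hSm⟩ := exists_rk M hEfin H
      rw [hrkH] at hSm
      have hSE : S ⊆ E := hSH.trans hHE
      have hSfin : S.Finite := hE.subset hSE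
      obtain ⟨B, ⟨hBT, hSB⟩, hBu⟩ := hT3 S hSE hSm
      have hHB : H ⊆ B := by
        intro x hxH
        by_cases hxS : x ∈ S
        · exact hSB hxS
        · have hcard : (insert x S).ncard = m + 1 :=
            Set.ncard_insert_of_notMem hxS hSfin ▸ by omega
          have hnind : ¬ M.Indep (insert x S) := by
            intro hind
            have := le_rk M hEfin hind (Set.insert_subset hxH hSH)
            rw [hrkH] at this
            omega
          rw [hMind] at hnind
          have hsubE : insert x S ⊆ E := Set.insert_subset (hHE hxH) hSE
          simp only [hInd] at hnind
          push_neg at hnind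
          obtain ⟨B', hB'T, hsub', hgt⟩ := hnind hsubE (by omega)
          have : B' = B := hBu B' ⟨hB'T, (Set.subset_insert x S).trans hsub'⟩
          exact this ▸ hsub' (Set.mem_insert x S)
      have hBH : B ⊆ H := by
        have h1 := (hspan B hBT S hSB hSm).1
        calc B ⊆ M.closure S := h1
          _ ⊆ M.closure H := M.closure_subset_closure hSH
          _ = H := hHflat.closure
      exact (Set.Subset.antisymm hHB hBH) ▸ hBT
    · intro hB
      obtain ⟨hBE, hBm⟩ := hT2 H hB
      obtain ⟨S, hSB, hSm⟩ := Set.exists_subset_card_eq hBm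
      obtain ⟨h1, h2⟩ := hspan H hB S hSB hSm
      have hcl : M.closure H = H := by
        refine Set.Subset.antisymm ?_ (M.subset_closure H hBE)
        calc M.closure H ⊆ M.closure (M.closure S) := M.closure_subset_closure h1
          _ = M.closure S := M.closure_closure S
          _ ⊆ H := h2
      refine ⟨hcl ▸ flat_closure M H, ?_⟩
      rw [hrkB H hB, hrkE]
  · -- Direction 2: hyperplanes of a paving matroid form an (r-1)-partition
    intro r M hr hME hrk hpav
    subst hME
    have hEfin : M.E.Finite := hE
    -- sets of size < r are independent
    have hindep : ∀ S : Set α, S ⊆ M.E → S.ncard < r → M.Indep S := by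
      intro S hSE hScard
      by_contra hdep
      obtain ⟨C, hCS, hC⟩ := exists_circuit_subset M hEfin S.ncard S rfl hSE hdep
      have h1 := hpav C hC
      have h2 : C.ncard ≤ S.ncard := Set.ncard_le_ncard hCS (hEfin.subset hSE)
      omega
    have hhyprk : ∀ H, IsHyperplane M H → rk M H = r - 1 := by
      intro H hH
      have := hH.2
      omega
    -- the closure of an (r-1)-set is a hyperplane
    have hclhyp : ∀ S : Set α, S ⊆ M.E → S.ncard = r - 1 →
        IsHyperplane M (M.closure S) := by
      intro S hSE hScard
      have hSi : M.Indep S := hindep S hSE (by omega)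
      refine ⟨flat_closure M S, ?_⟩
      rw [rk_closure M hEfin hSE, rk_indep M hEfin hSi, hScard, hrk]
      omega
    -- uniqueness: any hyperplane containing an (r-1)-set is its closure
    have huniq : ∀ S : Set α, S ⊆ M.E → S.ncard = r - 1 →
        ∀ H, IsHyperplane M H → S ⊆ H → H = M.closure S := by
      intro S hSE hScard H hH hSH
      have hSi : M.Indep S := hindep S hSE (by omega)
      have hHE : H ⊆ M.E := hH.1.subset_ground
      refine Set.Subset.antisymm ?_ ?_
      · intro x hxH
        by_contra hxcl
        have hxS : x ∉ S := fun h => hxcl (M.subset_closure S hSE h)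
        have hxi : M.Indep (insert x S) := by
          rw [hSi.insert_indep_iff_of_notMem hxS]
          exact ⟨hHE hxH, hxcl⟩
        have hle := le_rk M hEfin hxi (Set.insert_subset hxH hSH)
        rw [Set.ncard_insert_of_notMem hxS (hE.subset hSE)] at hle
        have := hhyprk H hH
        omega
      · calc M.closure S ⊆ M.closure H := M.closure_subset_closure hSH
          _ = H := hH.1.closure
    refine ⟨?_, ?_, ?_⟩
    · -- at least two hyperplanes
      obtain ⟨B, hB⟩ := M.exists_isBasis M.E Set.Subset.rfl
      have hBcard : B.ncard = r := (rk_basis M hEfin hB).symm.trans hrk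
      have hBfin : B.Finite := hE.subset hB.indep.subset_ground
      obtain ⟨e, heB, f, hfB, hef⟩ := (Set.one_lt_ncard hBfin).mp (by omega)
      have key : ∀ x ∈ B,
          IsHyperplane M (M.closure (B \ {x})) ∧ x ∉ M.closure (B \ {x}) := by
        intro x hxB
        have hsubE : B \ {x} ⊆ M.E := Set.diff_subset.trans hB.indep.subset_ground
        have hcard : (B \ {x}).ncard = r - 1 := by
          rw [Set.ncard_diff_singleton_of_mem hxB, hBcard]
        refine ⟨hclhyp _ hsubE hcard, ?_⟩
        intro hx
        have hi : M.Indep (B \ {x}) := hB.indep.subset Set.diff_subset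
        rw [hi.mem_closure_iff_of_notMem (by simp)] at hx
        rw [Set.insert_diff_singleton, Set.insert_eq_of_mem hxB] at hx
        exact hx.not_indep hB.indep
      have hne : M.closure (B \ {e}) ≠ M.closure (B \ {f}) := by
        intro h
        have h1 := (key e heB).2
        have h2 : e ∈ M.closure (B \ {f}) :=
          M.subset_closure _ (Set.diff_subset.trans hB.indep.subset_ground)
            ⟨heB, by simpa using hef⟩
        rw [← h] at h2
        exact h1 h2
      have hfinH : {H : Set α | IsHyperplane M H}.Finite := by
        refine Set.Finite.subset hE.finite_subsets ?_
        intro H hH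
        exact hH.1.subset_ground
      rw [Set.one_lt_ncard hfinH]
      exact ⟨_, (key e heB).1, _, (key f hfB).1, hne⟩
    · -- every hyperplane is a large subset of E
      intro H hH
      refine ⟨hH.1.subset_ground, ?_⟩
      obtain ⟨I, hIi, hIH, hIcard⟩ := exists_rk M hEfin H
      have hle : I.ncard ≤ H.ncard :=
        Set.ncard_le_ncard hIH (hE.subset hH.1.subset_ground)
      have := hhyprk H hH
      omega
    · -- every (r-1)-set lies in a unique hyperplane
      intro S hSE hScard
      refine ⟨M.closure S, ⟨hclhyp S hSE hScard, M.subset_closure S hSE⟩, ?_⟩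
      rintro H ⟨hH, hSH⟩
      exact huniq S hSE hScard H hH hSH

end TuttePaper
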